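/- For a maximal intersecting family 𝓐 of k-multisets of [n]_m (with n ≥ k + ⌈k/m⌉, k ≥ 2, m ≥ 2), there is a maximal intersecting family 𝓑 of nonempty proper subsets of [n] containing all supports of members of 𝓐, and 𝓐 equals exactly the set of k-multisets of [n]_m whose support belongs to 𝓑. -/

import Mathlib

attribute [local instance] Classical.propDecidable

def IsKMultiset {n m : ℕ} (k : ℕ) (f : Fin n → Fin (m + 1)) : Prop :=
  ∑ i, (f i : ℕ) = k

def MIntersect {n m : ℕ} (f g : Fin n → Fin (m + 1)) : Prop :=
  ∃ i, 1 ≤ (f i : ℕ) ∧ 1 ≤ (g i : ℕ)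

/-- The support of a multiset: the set of its distinct elements. -/
def msupport {n m : ℕ} (f : Fin n → Fin (m + 1)) : Finset (Fin n) :=
  Finset.univ.filter (fun i => 1 ≤ (f i : ℕ))

def SetIntersecting {n : ℕ} (ℬ : Set (Finset (Fin n))) : Prop :=
  ∀ A ∈ ℬ, ∀ B ∈ ℬ, (A ∩ B).Nonempty

/-- `ℬ` is a maximal intersecting family of nonempty proper subsets of `[n]`. -/
def MaximalIntersecting {n : ℕ} (ℬ : Set (Finset (Fin n))) : Prop :=
  (∀ B ∈ ℬ, B.Nonempty ∧ B ≠ Finset.univ) ∧ SetIntersecting ℬ ∧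
    ∀ B : Finset (Fin n), B.Nonempty → B ≠ Finset.univ → B ∉ ℬ →
      ¬ SetIntersecting (ℬ ∪ {B})

theorem stmt_19 (k m n : ℕ) (hk : 2 ≤ k) (hm : 2 ≤ m)
    (hn : k + (k + m - 1) / m ≤ n)
    (𝓐 : Finset (Fin n → Fin (m + 1)))
    (h𝓐k : ∀ f ∈ 𝓐, IsKMultiset k f)
    (h𝓐int : ∀ f ∈ 𝓐, ∀ g ∈ 𝓐, MIntersect f g)
    (h𝓐max : ∀ f : Fin n → Fin (m + 1), IsKMultiset k f → f ∉ 𝓐 →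
      ∃ g ∈ 𝓐, ¬ MIntersect f g) :
    ∃ ℬ : Set (Finset (Fin n)), MaximalIntersecting ℬ ∧
      (∀ f ∈ 𝓐, msupport f ∈ ℬ) ∧
      ∀ f : Fin n → Fin (m + 1), (f ∈ 𝓐 ↔ IsKMultiset k f ∧ msupport f ∈ ℬ) := by
  classical
  -- MIntersect in terms of supports
  have mint_iff : ∀ f g : Fin n → Fin (m + 1),
      MIntersect f g ↔ (msupport f ∩ msupport g).Nonempty := by
    intro f g
    simp [MIntersect, msupport, Finset.Nonempty, Finset.mem_inter, Finset.mem_filter]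
  -- n > k
  have hkn : k < n := by
    have h1 : 1 ≤ (k + m - 1) / m := by
      rw [Nat.one_le_div_iff (by omega)]
      omega
    omega
  -- supports of k-multisets are nonempty and proper
  have hsupp : ∀ f : Fin n → Fin (m + 1), IsKMultiset k f →
      (msupport f).Nonempty ∧ msupport f ≠ Finset.univ := by
    intro f hf
    constructor
    · by_contra h
      rw [Finset.not_nonempty_iff_eq_empty] at h
      have : ∀ i, (f i : ℕ) = 0 := by
        intro i
        by_contra hi
        have : i ∈ msupport f := by
          simp [msupport]; omega
        simp [h] at this
      have : ∑ i, (f i : ℕ) = 0 := Finset.sum_eq_zero (fun i _ => this i)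
      rw [hf] at this; omega
    · intro h
      have hcard : (msupport f).card ≤ k := by
        calc (msupport f).card = ∑ _i ∈ msupport f, 1 := by simp
        _ ≤ ∑ i ∈ msupport f, (f i : ℕ) := by
            apply Finset.sum_le_sum
            intro i hi
            simp [msupport] at hi
            exact hi
        _ ≤ ∑ i, (f i : ℕ) := Finset.sum_le_sum_of_subset (Finset.subset_univ _)
        _ = k := hf
      rw [h, Finset.card_univ, Fintype.card_fin] at hcard
      omega
  -- the family of supports
  set S : Finset (Finset (Fin n)) := 𝓐.image msupport with hS
  -- collection of intersecting families of nonempty proper sets containing S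
  set P : Finset (Finset (Fin n)) → Prop := fun 𝓒 =>
    S ⊆ 𝓒 ∧ (∀ B ∈ 𝓒, B.Nonempty ∧ B ≠ Finset.univ) ∧
      ∀ A ∈ 𝓒, ∀ B ∈ 𝓒, (A ∩ B).Nonempty with hP
  have hSP : P S := by
    refine ⟨le_refl _, ?_, ?_⟩
    · intro B hB
      rw [hS, Finset.mem_image] at hB
      obtain ⟨f, hf, rfl⟩ := hB
      exact hsupp f (h𝓐k f hf)
    · intro A hA B hB
      rw [hS, Finset.mem_image] at hA hB
      obtain ⟨f, hf, rfl⟩ := hA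
      obtain ⟨g, hg, rfl⟩ := hB
      exact (mint_iff f g).mp (h𝓐int f hf g hg)
  obtain ⟨ℬ₀, hℬ₀mem, hℬ₀max⟩ : ∃ m ∈ (Finset.univ : Finset (Finset (Finset (Fin n)))).filter P,
      ∀ x ∈ (Finset.univ : Finset (Finset (Finset (Fin n)))).filter P, ¬ m < x := by
    obtain ⟨i, hi⟩ := Finset.exists_maximal (s := (Finset.univ : Finset (Finset (Finset (Fin n)))).filter P)
      ⟨S, Finset.mem_filter.mpr ⟨Finset.mem_univ _, hSP⟩⟩
    exact ⟨i, hi.1, fun x hx hlt => hlt.not_ge (hi.2 hx hlt.le)⟩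
  rw [Finset.mem_filter] at hℬ₀mem
  obtain ⟨-, hSsub, hprop, hint⟩ := hℬ₀mem
  refine ⟨(↑ℬ₀ : Set (Finset (Fin n))), ⟨?_, ?_, ?_⟩, ?_, ?_⟩
  · intro B hB; exact hprop B hB
  · intro A hA B hB; exact hint A hA B hB
  · intro B hBne hBuniv hBnot hcontra
    have hins : insert B ℬ₀ ∈ (Finset.univ : Finset (Finset (Finset (Fin n)))).filter P := by
      rw [Finset.mem_filter]
      refine ⟨Finset.mem_univ _, hSsub.trans (Finset.subset_insert _ _), ?_, ?_⟩
      · intro C hC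
        rw [Finset.mem_insert] at hC
        rcases hC with rfl | hC
        · exact ⟨hBne, hBuniv⟩
        · exact hprop C hC
      · intro A hA C hC
        rw [Finset.mem_insert] at hA hC
        have hA' : A ∈ (↑ℬ₀ : Set (Finset (Fin n))) ∪ {B} := by
          rcases hA with rfl | hA
          · exact Or.inr rfl
          · exact Or.inl hA
        have hC' : C ∈ (↑ℬ₀ : Set (Finset (Fin n))) ∪ {B} := by
          rcases hC with rfl | hC
          · exact Or.inr rfl
          · exact Or.inl hC
        exact hcontra A hA' C hC'
    exact hℬ₀max _ hins (Finset.ssubset_insert hBnot)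
  · intro f hf
    exact hSsub (Finset.mem_image_of_mem msupport hf)
  · intro f
    constructor
    · intro hf
      exact ⟨h𝓐k f hf, hSsub (Finset.mem_image_of_mem msupport hf)⟩
    · rintro ⟨hfk, hfB⟩
      by_contra hfA
      obtain ⟨g, hg, hng⟩ := h𝓐max f hfk hfA
      apply hng
      apply (mint_iff f g).mpr
      exact hint _ hfB _ (hSsub (Finset.mem_image_of_mem msupport hg))
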